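/- Let (V, ω) be a symplectic vector space of dimension 2n, L: Λ^k V* → Λ^{k+2} V* the map η ↦ ω ∧ η, Λ its adjoint with respect to a compatible inner product, and H the operator acting on Λ^k V* by multiplication by (n−k). Then [Λ, L] = H, [H, Λ] = 2Λ, and [H, L] = −2L, i.e. (L, Λ, H) form an sl(2)-triple acting on the exterior algebra of V*. -/

import Mathlib

/-!
**Statement 0.** Let `(V, ω)` be a symplectic vector space of dimension `2n` (encoded by a
Darboux basis `f` of `V*`, with `ω = Σᵢ w_{2i-1} ∧ w_{2i}`), `L : Λ^k V* → Λ^{k+2} V*` the map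
`η ↦ ω ∧ η`, `Λ` the dual contraction operator
`Λ η = (1/2)(ω^{-1})^{ij} ι_{e_i} ι_{e_j} η = Σᵢ ι_{e_{2i}} ι_{e_{2i-1}} η`, and `H` the operator
acting on `Λ^k V*` by multiplication by `(n - k)`.  Then `[Λ, L] = H`, `[H, Λ] = 2Λ` and
`[H, L] = -2L`, i.e. `(L, Λ, H)` form an `sl(2)`-triple on the exterior algebra of `V*`.
-/
open ExteriorAlgebra CliffordAlgebra

section Sl2Aux

set_option linter.unreachableTactic false
set_option linter.unusedTactic false

private def finPairEquiv (n : ℕ) : Fin n × Fin 2 ≃ Fin (2*n) where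
  toFun p := ⟨2*p.1.1 + p.2.1, by have := p.1.2; have := p.2.2; omega⟩
  invFun m := (⟨m.1/2, by have := m.2; omega⟩, ⟨m.1 % 2, by omega⟩)
  left_inv p := by have := p.2.2; ext <;> simp <;> omega
  right_inv m := by ext; simp; omega

private lemma sum_fin_two_mul {β : Type*} [AddCommMonoid β] (n : ℕ) (g : Fin (2*n) → β) :
    ∑ m, g m = ∑ i : Fin n, (g ⟨2*i.1, by omega⟩ + g ⟨2*i.1+1, by omega⟩) := by
  rw [← Equiv.sum_comp (finPairEquiv n) g, Fintype.sum_prod_type]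
  refine Finset.sum_congr rfl fun i _ => ?_
  rw [Fin.sum_univ_two]
  congr 1 <;> apply congrArg <;> exact Fin.ext (by simp [finPairEquiv])

variable {M : Type} [AddCommGroup M] [Module ℝ M]

private lemma triple_contract (c d : Module.Dual ℝ M) (u w : M) (η : ExteriorAlgebra ℝ M) :
    contractLeft d (contractLeft c (ι ℝ u * (ι ℝ w * η))) =
      (c u * d w) • η - (c w * d u) • η
      - c u • (ι ℝ w * contractLeft d η) + c w • (ι ℝ u * contractLeft d η)
      + d u • (ι ℝ w * contractLeft c η) - d w • (ι ℝ u * contractLeft c η)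
      + ι ℝ u * (ι ℝ w * contractLeft d (contractLeft c η)) := by
  simp only [contractLeft_ι_mul, map_sub, map_smul, mul_sub, smul_sub, mul_smul_comm, mul_smul]
  module

private lemma coordval {N : ℕ} (f : Module.Basis (Fin N) ℝ M) (p q : Fin N) :
    f.coord p (f q) = if q = p then 1 else 0 := by
  simp [Module.Basis.coord_apply, Module.Basis.repr_self, Finsupp.single_apply]

private lemma cc1 {n : ℕ} (x x1 : Fin n) : 2*x1.1 = 2*x.1 ↔ x1 = x := by rw [Fin.ext_iff]; omega
private lemma cc2 {n : ℕ} (x x1 : Fin n) : 2*x1.1+1 = 2*x.1+1 ↔ x1 = x := by rw [Fin.ext_iff]; omega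
private lemma cc3 {n : ℕ} (x x1 : Fin n) : 2*x1.1+1 = 2*x.1 ↔ False := by simp; omega
private lemma cc4 {n : ℕ} (x x1 : Fin n) : 2*x1.1 = 2*x.1+1 ↔ False := by simp; omega

private lemma key (n : ℕ) (f : Module.Basis (Fin (2*n)) ℝ M) (η : ExteriorAlgebra ℝ M) :
    (∑ i : Fin n, contractLeft (f.coord ⟨2*i.1+1, by omega⟩)
      (contractLeft (f.coord ⟨2*i.1, by omega⟩)
        ((∑ j : Fin n, ι ℝ (f ⟨2*j.1, by omega⟩)
          * ι ℝ (f ⟨2*j.1+1, by omega⟩)) * η)))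
    = (n:ℝ) • η - (∑ m, ι ℝ (f m) * contractLeft (f.coord m) η)
      + (∑ j : Fin n, ι ℝ (f ⟨2*j.1, by omega⟩)
          * ι ℝ (f ⟨2*j.1+1, by omega⟩)) *
        ∑ i : Fin n, contractLeft (f.coord ⟨2*i.1+1, by omega⟩)
          (contractLeft (f.coord ⟨2*i.1, by omega⟩) η) := by
  rw [Finset.sum_mul]
  simp_rw [mul_assoc, map_sum, triple_contract, coordval, Fin.mk.injEq]
  simp only [cc1, cc2, cc3, cc4, if_false, ite_zero_mul_ite_zero, and_self, mul_one,
    zero_smul, zero_mul, smul_zero, sub_zero, add_zero, zero_add, ite_smul, one_smul,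
    Finset.sum_add_distrib, Finset.sum_sub_distrib, Finset.sum_ite_eq', Finset.mem_univ,
    if_true]
  rw [Finset.sum_comm, Finset.sum_const, Finset.card_univ, Fintype.card_fin,
    ← Nat.cast_smul_eq_nsmul ℝ, Finset.sum_mul]
  simp_rw [Finset.mul_sum, mul_assoc]
  rw [sum_fin_two_mul n (fun m => ι ℝ (f m) * contractLeft (f.coord m) η),
    Finset.sum_add_distrib]
  abel

private lemma number_op {N : ℕ} (f : Module.Basis (Fin N) ℝ M) (k : ℕ) (η : ExteriorAlgebra ℝ M)
    (hη : η ∈ ⋀[ℝ]^k M) :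
    ∑ m, ι ℝ (f m) * contractLeft (f.coord m) η = (k : ℝ) • η := by
  induction k generalizing η with
  | zero =>
    replace hη : η ∈ (LinearMap.range (ι ℝ : M →ₗ[ℝ] ExteriorAlgebra ℝ M)) ^ 0 := hη
    rw [pow_zero, Submodule.mem_one] at hη
    obtain ⟨r, rfl⟩ := hη
    simp [contractLeft_algebraMap]
  | succ k ih =>
    replace hη : η ∈ (LinearMap.range (ι ℝ : M →ₗ[ℝ] ExteriorAlgebra ℝ M)) ^ (k+1) := hη
    rw [pow_succ'] at hη
    refine Submodule.mul_induction_on hη (fun a ha b hb => ?_) (fun x y hx hy => ?_)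
    · obtain ⟨v, rfl⟩ := ha
      have expand : ∑ m, (f.coord m v) • ι ℝ (f m) = ι ℝ v := by
        simp_rw [Module.Basis.coord_apply, ← map_smul, ← map_sum, f.sum_repr]
      calc ∑ m, ι ℝ (f m) * contractLeft (f.coord m) (ι ℝ v * b)
          = ∑ m, ((f.coord m v) • (ι ℝ (f m) * b)
              - ι ℝ (f m) * (ι ℝ v * contractLeft (f.coord m) b)) := by
            simp [contractLeft_ι_mul, mul_sub, mul_smul_comm]
        _ = (∑ m, (f.coord m v) • ι ℝ (f m)) * b
              + ι ℝ v * ∑ m, ι ℝ (f m) * contractLeft (f.coord m) b := by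
            rw [Finset.sum_sub_distrib, Finset.sum_mul, Finset.mul_sum, sub_eq_add_neg,
              ← Finset.sum_neg_distrib]
            congr 1
            · exact Finset.sum_congr rfl fun m _ => (smul_mul_assoc _ _ _).symm
            · refine Finset.sum_congr rfl fun m _ => ?_
              have h := ι_add_mul_swap (R := ℝ) (f m) v
              have h2 : ι ℝ (f m) * ι ℝ v = - (ι ℝ v * ι ℝ (f m)) :=
                eq_neg_of_add_eq_zero_left h
              rw [← mul_assoc, h2, neg_mul, mul_assoc, neg_neg]
        _ = (((k:ℕ)+1 : ℕ):ℝ) • (ι ℝ v * b) := by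
            rw [expand, ih b hb, mul_smul_comm]
            push_cast
            module
    · simp only [map_add, mul_add, Finset.sum_add_distrib, hx, hy, smul_add]

private lemma contract_mem_exteriorPower (d : Module.Dual ℝ M) :
    ∀ (k : ℕ) (η : ExteriorAlgebra ℝ M), η ∈ ⋀[ℝ]^(k+1) M →
      contractLeft d η ∈ ⋀[ℝ]^k M := by
  intro k
  induction k with
  | zero =>
    intro η hη
    replace hη : η ∈ (LinearMap.range (ι ℝ : M →ₗ[ℝ] ExteriorAlgebra ℝ M)) ^ 1 := hη
    rw [pow_one] at hη
    obtain ⟨v, rfl⟩ := hη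
    rw [contractLeft_ι]
    exact SetLike.algebraMap_mem_graded (fun i : ℕ => ⋀[ℝ]^i M) _
  | succ k ih =>
    intro η hη
    replace hη : η ∈ (LinearMap.range (ι ℝ : M →ₗ[ℝ] ExteriorAlgebra ℝ M)) ^ (k+2) := hη
    rw [pow_succ'] at hη
    refine Submodule.mul_induction_on hη (fun a ha b hb => ?_) (fun x y hx hy => ?_)
    · obtain ⟨v, rfl⟩ := ha
      rw [contractLeft_ι_mul]
      refine Submodule.sub_mem _ (Submodule.smul_mem _ _ hb) ?_
      have h1 : ι ℝ v ∈ ⋀[ℝ]^1 M := by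
        rw [exteriorPower, pow_one]; exact LinearMap.mem_range_self _ v
      have h2 := SetLike.mul_mem_graded h1 (ih b hb)
      rwa [add_comm] at h2
    · rw [map_add]; exact Submodule.add_mem _ hx hy

private lemma contract_zero_of_zeroth (d : Module.Dual ℝ M) (η : ExteriorAlgebra ℝ M)
    (hη : η ∈ ⋀[ℝ]^0 M) : contractLeft d η = 0 := by
  replace hη : η ∈ (LinearMap.range (ι ℝ : M →ₗ[ℝ] ExteriorAlgebra ℝ M)) ^ 0 := hη
  rw [pow_zero, Submodule.mem_one] at hη
  obtain ⟨r, rfl⟩ := hη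
  exact contractLeft_algebraMap _ _ _

end Sl2Aux

set_option synthInstance.maxHeartbeats 400000 in
set_option maxHeartbeats 1000000 in
theorem sl2_triple_on_exterior_algebra
    (n : ℕ) (V : Type) [AddCommGroup V] [Module ℝ V]
    -- a Darboux basis of one-forms (equivalently, a symplectic structure ω on V)
    (f : Module.Basis (Fin (2 * n)) ℝ (Module.Dual ℝ V))
    (ω : ExteriorAlgebra ℝ (Module.Dual ℝ V))
    (hω : ω = ∑ i : Fin n,
      ExteriorAlgebra.ι ℝ (f ⟨2 * i.1, by have := i.2; omega⟩) *
      ExteriorAlgebra.ι ℝ (f ⟨2 * i.1 + 1, by have := i.2; omega⟩))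
    (Lop Λop Hop : ExteriorAlgebra ℝ (Module.Dual ℝ V) →ₗ[ℝ]
      ExteriorAlgebra ℝ (Module.Dual ℝ V))
    -- L is wedging with ω
    (hL : ∀ η, Lop η = ω * η)
    -- Λ is the contraction operator dual to L
    (hΛ : Λop = ∑ i : Fin n,
      (CliffordAlgebra.contractLeft (f.coord ⟨2 * i.1 + 1, by have := i.2; omega⟩)).comp
        (CliffordAlgebra.contractLeft (f.coord ⟨2 * i.1, by have := i.2; omega⟩)))
    -- H is multiplication by (n - k) on k-forms
    (hH : ∀ (k : ℕ) (η : ExteriorAlgebra ℝ (Module.Dual ℝ V)),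
      η ∈ ⋀[ℝ]^k (Module.Dual ℝ V) → Hop η = ((n : ℝ) - (k : ℝ)) • η) :
    Λop ∘ₗ Lop - Lop ∘ₗ Λop = Hop ∧
    Hop ∘ₗ Λop - Λop ∘ₗ Hop = (2 : ℝ) • Λop ∧
    Hop ∘ₗ Lop - Lop ∘ₗ Hop = (-2 : ℝ) • Lop := by
  have hΛapp : ∀ η, Λop η = ∑ i : Fin n,
      contractLeft (f.coord ⟨2 * i.1 + 1, by have := i.2; omega⟩)
        (contractLeft (f.coord ⟨2 * i.1, by have := i.2; omega⟩) η) := by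
    intro η
    rw [hΛ]
    simp [LinearMap.sum_apply, LinearMap.comp_apply]
  have hkey : ∀ η, Λop (ω * η) = (n:ℝ) • η
      - (∑ m, ι ℝ (f m) * contractLeft (f.coord m) η) + ω * Λop η := by
    intro η
    rw [hΛapp, hΛapp, hω]
    exact key n f η
  have hι1 : ∀ v : Module.Dual ℝ V, ι ℝ v ∈ ⋀[ℝ]^1 (Module.Dual ℝ V) := by
    intro v
    rw [exteriorPower, pow_one]
    exact LinearMap.mem_range_self _ v
  have hωmem : ω ∈ ⋀[ℝ]^2 (Module.Dual ℝ V) := by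
    rw [hω]
    refine Submodule.sum_mem _ fun i _ => ?_
    have h2 := SetLike.mul_mem_graded (hι1 (f ⟨2 * i.1, by have := i.2; omega⟩))
      (hι1 (f ⟨2 * i.1 + 1, by have := i.2; omega⟩))
    have e : (1 + 1 : ℕ) = 2 := by norm_num
    rwa [e] at h2
  have hLmem : ∀ (k : ℕ) η, η ∈ ⋀[ℝ]^k (Module.Dual ℝ V) →
      Lop η ∈ ⋀[ℝ]^(k+2) (Module.Dual ℝ V) := by
    intro k η hη
    rw [hL]
    have h2 := SetLike.mul_mem_graded hωmem hη
    rwa [add_comm] at h2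
  have hΛmem : ∀ (k : ℕ) η, η ∈ ⋀[ℝ]^(k+2) (Module.Dual ℝ V) →
      Λop η ∈ ⋀[ℝ]^k (Module.Dual ℝ V) := by
    intro k η hη
    rw [hΛapp]
    refine Submodule.sum_mem _ fun i _ => ?_
    exact contract_mem_exteriorPower _ k _
      (contract_mem_exteriorPower _ (k+1) η hη)
  have hΛ0 : ∀ η, η ∈ ⋀[ℝ]^0 (Module.Dual ℝ V) → Λop η = 0 := by
    intro η hη
    rw [hΛapp]
    refine Finset.sum_eq_zero fun i _ => ?_
    rw [contract_zero_of_zeroth _ _ hη, map_zero]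
  have hΛ1 : ∀ η, η ∈ ⋀[ℝ]^1 (Module.Dual ℝ V) → Λop η = 0 := by
    intro η hη
    replace hη : η ∈ (LinearMap.range (ι ℝ : Module.Dual ℝ V →ₗ[ℝ] _)) ^ 1 := hη
    rw [pow_one] at hη
    obtain ⟨v, rfl⟩ := hη
    rw [hΛapp]
    refine Finset.sum_eq_zero fun i _ => ?_
    rw [contractLeft_ι, contractLeft_algebraMap]
  have hext : ∀ (A B : ExteriorAlgebra ℝ (Module.Dual ℝ V) →ₗ[ℝ]
      ExteriorAlgebra ℝ (Module.Dual ℝ V)),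
      (∀ (k : ℕ) η, η ∈ ⋀[ℝ]^k (Module.Dual ℝ V) → A η = B η) → A = B := by
    intro A B h
    have hint : DirectSum.IsInternal (fun k : ℕ => ⋀[ℝ]^k (Module.Dual ℝ V)) :=
      DirectSum.Decomposition.isInternal _
    refine LinearMap.ext fun x => ?_
    have hx : x ∈ ⨆ k : ℕ, ⋀[ℝ]^k (Module.Dual ℝ V) :=
      hint.submodule_iSup_eq_top ▸ Submodule.mem_top
    refine Submodule.iSup_induction (motive := fun y => A y = B y) _ hx
      (fun k y hy => h k y hy) (by show A 0 = B 0; rw [map_zero, map_zero]) (fun a b ha hb => ?_)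
    show A (a + b) = B (a + b)
    rw [map_add, map_add, ha, hb]
  refine ⟨hext _ _ fun k η hη => ?_, hext _ _ fun k η hη => ?_, hext _ _ fun k η hη => ?_⟩
  · simp only [LinearMap.sub_apply, LinearMap.comp_apply]
    rw [hL, hkey, hL, number_op f k η hη, hH k η hη]
    module
  · simp only [LinearMap.sub_apply, LinearMap.comp_apply, LinearMap.smul_apply]
    match k, hη with
    | 0, hη =>
      rw [hH 0 η hη, map_smul, hΛ0 η hη]
      simp
    | 1, hη =>
      rw [hH 1 η hη, map_smul, hΛ1 η hη]
      simp
    | (k+2), hη =>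
      rw [hH _ _ (hΛmem k η hη), hH _ _ hη, map_smul]
      push_cast
      module
  · simp only [LinearMap.sub_apply, LinearMap.comp_apply, LinearMap.smul_apply]
    rw [hH _ _ (hLmem k η hη), hH _ _ hη, map_smul]
    push_cast
    module
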